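/- arXiv:1511.00942 — 3 statements merged into one kernel-verified Lean document; each statement's English description precedes it below -/
import Mathlib

section
/- Let w > 1, ϱ(k) = √((1−w)² + 4w·cos²(k)), λ₋(k) = 1 + w − ϱ(k), and c_w² = 2w/(1+w). Then for all k ∈ ℝ, |λ₋'(k)| ≤ 2·c_w²·|k|. -/
open Real

/-- Derivative bound for the acoustic branch: |λ₋'(k)| ≤ 2 c_w² |k| with c_w² = 2w/(1+w). -/
theorem lambdaMinus_deriv_bound (w : ℝ) (hw : 1 < w) (k : ℝ) :
    |deriv (fun x => 1 + w - Real.sqrt ((1 - w)^2 + 4*w*(Real.cos x)^2)) k|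
      ≤ 2 * (2*w/(1+w)) * |k| := by
  have hwpos : (0:ℝ) < w := lt_trans one_pos hw
  set g : ℝ → ℝ := fun x => (1 - w)^2 + 4*w*(Real.cos x)^2 with hg
  have hgpos : ∀ x, 0 < g x := by
    intro x
    have h1 : (0:ℝ) < (1 - w)^2 := by nlinarith
    have h2 : (0:ℝ) ≤ 4*w*(Real.cos x)^2 := by positivity
    simp only [hg]; linarith
  have hgd : HasDerivAt g (4*w*(2*Real.cos k*(-Real.sin k))) k := by
    have h1 : HasDerivAt (fun x : ℝ => (Real.cos x)^2) (2*Real.cos k*(-Real.sin k)) k := by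
      simpa using (Real.hasDerivAt_cos k).fun_pow 2
    simpa [hg] using ((h1.const_mul (4*w)).const_add ((1-w)^2))
  have hsd : HasDerivAt (fun x => Real.sqrt (g x))
      ((4*w*(2*Real.cos k*(-Real.sin k))) / (2*Real.sqrt (g k))) k :=
    hgd.sqrt (ne_of_gt (hgpos k))
  have hfd : HasDerivAt (fun x => 1 + w - Real.sqrt (g x))
      (-((4*w*(2*Real.cos k*(-Real.sin k))) / (2*Real.sqrt (g k)))) k := by
    simpa using hsd.const_sub (1+w)
  have hderiv : deriv (fun x => 1 + w - Real.sqrt ((1 - w)^2 + 4*w*(Real.cos x)^2)) k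
      = -((4*w*(2*Real.cos k*(-Real.sin k))) / (2*Real.sqrt (g k))) := by
    exact hfd.deriv
  rw [hderiv]
  have hsg : (1+w)*|Real.cos k| ≤ Real.sqrt (g k) := by
    have h1 : ((1+w)*|Real.cos k|)^2 ≤ g k := by
      have hc2 : (Real.cos k)^2 ≤ 1 := by
        have := abs_cos_le_one k
        nlinarith [abs_nonneg (Real.cos k), sq_abs (Real.cos k)]
      have : ((1+w)*|Real.cos k|)^2 = (1+w)^2*(Real.cos k)^2 := by
        rw [mul_pow, sq_abs]
      rw [this]
      simp only [hg]
      nlinarith [sq_nonneg (1-w), sq_nonneg (Real.cos k)]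
    have h0 : 0 ≤ (1+w)*|Real.cos k| := by positivity
    calc (1+w)*|Real.cos k| = Real.sqrt (((1+w)*|Real.cos k|)^2) := (Real.sqrt_sq h0).symm
      _ ≤ Real.sqrt (g k) := Real.sqrt_le_sqrt h1
  have hsin : |Real.sin k| ≤ |k| := abs_sin_le_abs
  have hgsq : 0 < Real.sqrt (g k) := Real.sqrt_pos.mpr (hgpos k)
  have habs : |(-((4*w*(2*Real.cos k*(-Real.sin k))) / (2*Real.sqrt (g k))))|
      = 4*w * |Real.cos k| * |Real.sin k| / Real.sqrt (g k) := by
    rw [abs_neg, abs_div]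
    rw [abs_of_pos (by linarith : (0:ℝ) < 2*Real.sqrt (g k))]
    rw [show (4*w*(2*Real.cos k*(-Real.sin k))) = -((8*w)*(Real.cos k*Real.sin k)) by ring]
    rw [abs_neg, abs_mul ((8:ℝ)*w), abs_mul (Real.cos k), abs_of_pos (by linarith : (0:ℝ) < 8*w)]
    field_simp
    ring
  rw [habs]
  rcases eq_or_ne (Real.cos k) 0 with hc | hc
  · simp [hc]
    positivity
  · have hcpos : 0 < |Real.cos k| := abs_pos.mpr hc
    have key : |Real.cos k| / Real.sqrt (g k) ≤ 1/(1+w) := by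
      rw [div_le_div_iff₀ hgsq (by linarith)]
      linarith [hsg]
    have h1 : 4*w * |Real.cos k| * |Real.sin k| / Real.sqrt (g k)
        = (4*w*|Real.sin k|) * (|Real.cos k| / Real.sqrt (g k)) := by ring
    rw [h1]
    have h2 : (4*w*|Real.sin k|) * (|Real.cos k| / Real.sqrt (g k))
        ≤ (4*w*|Real.sin k|) * (1/(1+w)) := by
      apply mul_le_mul_of_nonneg_left key
      positivity
    have h3 : (4*w*|Real.sin k|) * (1/(1+w)) ≤ (4*w*|k|) * (1/(1+w)) := by
      apply mul_le_mul_of_nonneg_right _ (by positivity)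
      nlinarith
    have h4 : (4*w*|k|) * (1/(1+w)) = 2 * (2*w/(1+w)) * |k| := by
      ring
    linarith
end

section
/- Let w > 1, λ₋(k) = 1 + w − √((1−w)² + 4w·cos²(k)), and c_w² = 2w/(1+w). If c ∈ ℝ with c² ≥ c_w², then c²k² − λ₋(k) > 0 for every real k ≠ 0. -/
private lemma mono_start {f f' : ℝ → ℝ} (hf : ∀ x, HasDerivAt f (f' x) x)
    (h0 : ∀ x, 0 < x → 0 ≤ f' x) {a : ℝ} (ha : 0 ≤ a) : f 0 ≤ f a := by
  have hdiff : Differentiable ℝ f := fun x => (hf x).differentiableAt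
  have hmono : MonotoneOn f (Set.Ici 0) :=
    monotoneOn_of_deriv_nonneg (convex_Ici 0) hdiff.continuous.continuousOn
      hdiff.differentiableOn (fun x hx => by
        rw [(hf x).deriv]
        exact h0 x (by simpa [interior_Ici] using hx))
  exact hmono Set.self_mem_Ici ha ha

private lemma sin_ge_cubic {x : ℝ} (hx : 0 ≤ x) : x - x^3/6 ≤ Real.sin x := by
  have h := mono_start (f := fun t => Real.sin t - (t - t^3/6))
      (f' := fun t => Real.cos t - (1 - (3:ℝ) * t^2/6))
      (fun t => by
        have := (Real.hasDerivAt_sin t).sub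
          (((hasDerivAt_id t).sub ((hasDerivAt_pow 3 t).div_const 6)))
        exact this.congr_deriv (by push_cast; ring))
      (fun t ht => by
        have := Real.one_sub_sq_div_two_le_cos (x := t)
        nlinarith)
      hx
  simp at h
  linarith

private lemma cos_le_quartic {x : ℝ} (hx : 0 ≤ x) : Real.cos x ≤ 1 - x^2/2 + x^4/24 := by
  have h := mono_start (f := fun t => (1 - t^2/2 + t^4/24) - Real.cos t)
      (f' := fun t => (-((2:ℝ) * t)/2 + (4:ℝ)*t^3/24) + Real.sin t)
      (fun t => by
        have h1 : HasDerivAt (fun t : ℝ => 1 - t^2/2 + t^4/24)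
            (-((2:ℝ) * t)/2 + (4:ℝ)*t^3/24) t := by
          have := (((hasDerivAt_const t (1:ℝ)).sub ((hasDerivAt_pow 2 t).div_const 2)).add
            ((hasDerivAt_pow 4 t).div_const 24))
          exact this.congr_deriv (by push_cast; ring)
        have := h1.sub (Real.hasDerivAt_cos t)
        exact this.congr_deriv (by ring))
      (fun t ht => by
        have := sin_ge_cubic ht.le
        nlinarith)
      hx
  simp at h
  linarith

private lemma sin_le_quintic {x : ℝ} (hx : 0 ≤ x) : Real.sin x ≤ x - x^3/6 + x^5/120 := by
  have h := mono_start (f := fun t => (t - t^3/6 + t^5/120) - Real.sin t)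
      (f' := fun t => (1 - (3:ℝ)*t^2/6 + (5:ℝ)*t^4/120) - Real.cos t)
      (fun t => by
        have h1 : HasDerivAt (fun t : ℝ => t - t^3/6 + t^5/120)
            (1 - (3:ℝ)*t^2/6 + (5:ℝ)*t^4/120) t := by
          have := (((hasDerivAt_id t).sub ((hasDerivAt_pow 3 t).div_const 6)).add
            ((hasDerivAt_pow 5 t).div_const 120))
          exact this.congr_deriv (by push_cast; ring)
        have := h1.sub (Real.hasDerivAt_sin t)
        exact this.congr_deriv (by ring))
      (fun t ht => by
        have := cos_le_quartic ht.le
        nlinarith)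
      hx
  simp at h
  linarith

private lemma quintic_sq_lt {x : ℝ} (hx : 0 < x) (hx2 : x^2 < 2) :
    (x - x^3/6 + x^5/120)^2 < x^2 - x^4/4 := by
  nlinarith [mul_pos (sub_pos.mpr hx2) (show (0:ℝ) < x^4 - 38*x^2 + 564 by nlinarith [sq_nonneg (x^2 - 19)]), pow_pos hx 4, sq_nonneg x]

set_option maxHeartbeats 1000000 in
/-- Supersonic condition: if c² ≥ c_w² then c²k² − λ₋(k) > 0 for all k ≠ 0. -/
theorem supersonic_positivity (w c : ℝ) (hw : 1 < w) (hc : 2*w/(1+w) ≤ c^2)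
    (k : ℝ) (hk : k ≠ 0) :
    0 < c^2 * k^2 - (1 + w - Real.sqrt ((1 - w)^2 + 4*w*(Real.cos k)^2)) := by
  have hx : 0 < |k| := abs_pos.mpr hk
  set x := |k| with hxdef
  have hcos : Real.cos k ^ 2 = Real.cos x ^ 2 := by rw [Real.cos_abs]
  have hk2 : k ^ 2 = x ^ 2 := (sq_abs k).symm
  rw [hcos, hk2]
  have hw1 : (0:ℝ) < 1 + w := by linarith
  have hc' : 2*w ≤ c^2*(1+w) := by
    rw [div_le_iff₀ hw1] at hc; linarith
  set s := Real.sin x ^ 2 with hsdef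
  have hs0 : 0 ≤ s := sq_nonneg _
  have hs1 : s ≤ 1 := Real.sin_sq_le_one x
  have hD : (1-w)^2 + 4*w*Real.cos x^2 = (1+w)^2 - 4*w*s := by
    have h := Real.sin_sq_add_cos_sq x
    have : Real.cos x ^ 2 = 1 - s := by rw [hsdef]; linarith
    rw [this]; ring
  rcases le_or_gt (1+w) (c^2*x^2) with hA | hB
  · have h1 : 0 < Real.sqrt ((1-w)^2 + 4*w*Real.cos x^2) :=
      Real.sqrt_pos.mpr (by nlinarith [sq_nonneg (Real.cos x)])
    linarith
  · have hwx : 2*w*x^2 < (1+w)^2 := by nlinarith [sq_nonneg x]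
    have key : (1+w)^2*s < (1+w)^2*x^2 - w*x^4 := by
      rcases le_or_gt 2 (x^2) with h2 | h2
      · nlinarith [sq_nonneg x, mul_pos hw1 hw1]
      · have hx2 : x < 2 := by nlinarith
        have hsin0 : 0 ≤ Real.sin x :=
          Real.sin_nonneg_of_nonneg_of_le_pi hx.le (by nlinarith [Real.pi_gt_three])
        have hP : Real.sin x ≤ x - x^3/6 + x^5/120 := sin_le_quintic hx.le
        have hPsq : s < x^2 - x^4/4 := by
          have h1 : s ≤ (x - x^3/6 + x^5/120)^2 := by nlinarith
          exact lt_of_le_of_lt h1 (quintic_sq_lt hx h2)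
        nlinarith [sq_nonneg (w-1), pow_nonneg (abs_nonneg k) 4]
    have fact1 : 0 ≤ (1+w)*c^2 - 2*w := by linarith
    have h2a : 0 ≤ x^2*((1+w) - c^2*x^2) := mul_nonneg (sq_nonneg x) (by linarith)
    have h2c : 0 ≤ x^2*((1+w)^2 - 2*w*x^2) := mul_nonneg (sq_nonneg x) (by linarith)
    have fact2 : 0 ≤ 2*(1+w)^2*x^2 - ((1+w)*c^2 + 2*w)*x^4 := by
      linarith [mul_nonneg hw1.le h2a, h2c]
    have fact3 : 0 ≤ ((1+w)*c^2 - 2*w) * (2*(1+w)^2*x^2 - ((1+w)*c^2 + 2*w)*x^4) :=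
      mul_nonneg fact1 fact2
    have main : (1+w)^2 * (1 + w - c^2*x^2)^2 < (1+w)^2 * ((1+w)^2 - 4*w*s) := by
      nlinarith [mul_pos (show (0:ℝ) < 4*w by linarith) (sub_pos.mpr key), fact3]
    have hsq : (1 + w - c^2*x^2)^2 < (1-w)^2 + 4*w*Real.cos x^2 := by
      rw [hD]
      exact lt_of_mul_lt_mul_left main (by positivity)
    have := Real.lt_sqrt_of_sq_lt hsq
    linarith
end

section
/- Let w > 1, ϱ(k) = √((1−w)² + 4w·cos²(k)), and λ₋(k) = 1 + w − ϱ(k). Then the third derivative λ₋'''(k) is strictly negative for all k ∈ (0, π/2). -/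
noncomputable def rhoF (w x : ℝ) : ℝ := Real.sqrt ((1-w)^2 + 4*w*(Real.cos x)^2)

noncomputable def f1F (w x : ℝ) : ℝ := 4*w*Real.sin x*Real.cos x / rhoF w x

noncomputable def f2F (w x : ℝ) : ℝ :=
  (4*w*((Real.cos x)^2-(Real.sin x)^2)*(rhoF w x)^2
    + 16*w^2*(Real.sin x)^2*(Real.cos x)^2) / (rhoF w x)^3

/-- The third derivative of the acoustic branch λ₋ is strictly negative on (0, π/2). -/
theorem lambdaMinus_third_deriv_neg (w : ℝ) (hw : 1 < w) (k : ℝ)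
    (hk : k ∈ Set.Ioo 0 (Real.pi/2)) :
    iteratedDeriv 3 (fun x => 1 + w - Real.sqrt ((1-w)^2 + 4*w*(Real.cos x)^2)) k < 0 := by
  obtain ⟨hk0, hk2⟩ := hk
  have hw0 : (0:ℝ) < w := by linarith
  have h1w : (0:ℝ) < (1-w)^2 := by nlinarith
  have hgpos : ∀ x : ℝ, 0 < (1-w)^2 + 4*w*(Real.cos x)^2 := by
    intro x
    have h2 : (0:ℝ) ≤ 4*w*(Real.cos x)^2 := by positivity
    linarith
  have hρpos : ∀ x, 0 < rhoF w x := fun x => Real.sqrt_pos.mpr (hgpos x)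
  have hρsq : ∀ x, (rhoF w x)^2 = (1-w)^2 + 4*w*(Real.cos x)^2 :=
    fun x => Real.sq_sqrt (hgpos x).le
  have hρ' : ∀ x, HasDerivAt (rhoF w) (-4*w*Real.sin x*Real.cos x / rhoF w x) x := by
    intro x
    have hg : HasDerivAt (fun x : ℝ => (1-w)^2 + 4*w*(Real.cos x)^2)
        (-8*w*Real.sin x*Real.cos x) x := by
      have hc : HasDerivAt (fun x : ℝ => (Real.cos x)^2)
          (2*(Real.cos x)^(2-1)*(-(Real.sin x))) x := (Real.hasDerivAt_cos x).pow 2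
      have h := (hc.const_mul (4*w)).const_add ((1-w)^2)
      convert h using 1
      · rfl
      · rfl
      ring
    have h := hg.sqrt (hgpos x).ne'
    unfold rhoF
    convert h using 1
    have hne : Real.sqrt ((1-w)^2+4*w*(Real.cos x)^2) ≠ 0 := (hρpos x).ne'
    field_simp
    ring
  have hf' : ∀ x : ℝ, HasDerivAt (fun x => 1 + w - Real.sqrt ((1-w)^2 + 4*w*(Real.cos x)^2))
      (f1F w x) x := by
    intro x
    have h := (hρ' x).const_sub (1+w)
    unfold rhoF at h
    convert h using 1
    · rfl
    · rfl
    unfold f1F rhoF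
    ring
  have hf1' : ∀ x : ℝ, HasDerivAt (f1F w) (f2F w x) x := by
    intro x
    have hnum : HasDerivAt (fun x => 4*w*Real.sin x*Real.cos x)
        (4*w*((Real.cos x)^2-(Real.sin x)^2)) x := by
      have h := ((Real.hasDerivAt_sin x).mul (Real.hasDerivAt_cos x)).const_mul (4*w)
      convert h using 1
      · rfl
      · rfl
      · funext y; simp only [Pi.mul_apply]; ring
      · ring
    have h := hnum.div (hρ' x) (hρpos x).ne'
    unfold f1F f2F
    convert h using 1
    · rfl
    · rfl
    · rfl
    have hne := (hρpos x).ne'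
    field_simp
    ring
  have hρ2 : HasDerivAt (fun x => (rhoF w x)^2) (-8*w*Real.sin k*Real.cos k) k := by
    have h := (hρ' k).pow 2
    convert h using 1
    · rfl
    · rfl
    · rfl
    have hne := (hρpos k).ne'
    field_simp
    ring
  have hA : HasDerivAt (fun x => 4*w*((Real.cos x)^2-(Real.sin x)^2))
      (-16*w*Real.sin k*Real.cos k) k := by
    have h := (((Real.hasDerivAt_cos k).pow 2).sub ((Real.hasDerivAt_sin k).pow 2)).const_mul (4*w)
    convert h using 1
    · rfl
    · rfl
    · rfl
    ring
  have hB : HasDerivAt (fun x => (Real.sin x)^2*(Real.cos x)^2)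
      (2*Real.sin k*(Real.cos k)^3 - 2*(Real.sin k)^3*Real.cos k) k := by
    have h := ((Real.hasDerivAt_sin k).pow 2).mul ((Real.hasDerivAt_cos k).pow 2)
    convert h using 1
    · rfl
    · rfl
    · rfl
    simp only [Pi.pow_apply]
    ring
  have hN : HasDerivAt (fun x => 4*w*((Real.cos x)^2-(Real.sin x)^2)*(rhoF w x)^2
      + 16*w^2*(Real.sin x)^2*(Real.cos x)^2)
      (-16*w*Real.sin k*Real.cos k*(rhoF w k)^2) k := by
    have h := (hA.mul hρ2).add (hB.const_mul (16*w^2))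
    convert h using 1
    · rfl
    · rfl
    · funext y; simp only [Pi.add_apply, Pi.mul_apply]; ring
    · ring
  have hD : HasDerivAt (fun x => (rhoF w x)^3) (-12*w*Real.sin k*Real.cos k*rhoF w k) k := by
    have h := (hρ' k).pow 3
    convert h using 1
    · rfl
    · rfl
    · rfl
    have hne := (hρpos k).ne'
    field_simp
    ring
  have hf2' : HasDerivAt (f2F w)
      ((-16*w*Real.sin k*Real.cos k*(rhoF w k)^2 * (rhoF w k)^3
        - (4*w*((Real.cos k)^2-(Real.sin k)^2)*(rhoF w k)^2
            + 16*w^2*(Real.sin k)^2*(Real.cos k)^2) * (-12*w*Real.sin k*Real.cos k*rhoF w k))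
        / ((rhoF w k)^3)^2) k := by
    unfold f2F
    exact hN.div hD (pow_ne_zero 3 (hρpos k).ne')
  rw [iteratedDeriv_succ, iteratedDeriv_succ, iteratedDeriv_one]
  have e1 : deriv (fun x => 1 + w - Real.sqrt ((1-w)^2 + 4*w*(Real.cos x)^2)) = f1F w :=
    funext fun x => (hf' x).deriv
  rw [e1]
  have e2 : deriv (f1F w) = f2F w := funext fun x => (hf1' x).deriv
  rw [e2, hf2'.deriv]
  have hs : 0 < Real.sin k := Real.sin_pos_of_pos_of_lt_pi hk0 (by linarith [Real.pi_pos])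
  have hc : 0 < Real.cos k := Real.cos_pos_of_mem_Ioo ⟨by linarith [Real.pi_pos], hk2⟩
  have hr := hρpos k
  apply div_neg_of_neg_of_pos _ (by positivity)
  have hr2 := hρsq k
  have hsc : (Real.sin k)^2 = 1 - (Real.cos k)^2 := by
    have := Real.sin_sq_add_cos_sq k
    linarith
  have hbr : -4*(rhoF w k)^4 + 12*w*((Real.cos k)^2-(Real.sin k)^2)*(rhoF w k)^2
      + 48*w^2*(Real.sin k)^2*(Real.cos k)^2 < 0 := by
    rw [show (rhoF w k)^4 = ((rhoF w k)^2)^2 by ring, hr2, hsc]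
    nlinarith [sq_nonneg (w*(Real.cos k)^2), mul_pos hw0 h1w,
      mul_nonneg (mul_nonneg hw0.le h1w.le) (sq_nonneg (Real.cos k)),
      sq_nonneg ((1-w)^2)]
  have hfac : -16*w*Real.sin k*Real.cos k*(rhoF w k)^2 * (rhoF w k)^3
      - (4*w*((Real.cos k)^2-(Real.sin k)^2)*(rhoF w k)^2
          + 16*w^2*(Real.sin k)^2*(Real.cos k)^2) * (-12*w*Real.sin k*Real.cos k*rhoF w k)
      = 4*w*Real.sin k*Real.cos k*rhoF w k *
        (-4*(rhoF w k)^4 + 12*w*((Real.cos k)^2-(Real.sin k)^2)*(rhoF w k)^2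
          + 48*w^2*(Real.sin k)^2*(Real.cos k)^2) := by ring
  rw [hfac]
  exact mul_neg_of_pos_of_neg (by positivity) hbr
end
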